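/- The function ψ = (1 − ελ₄X)e^{−ε(T/λ₄ + Y)} is annihilated by both L0 = ∂_Y − λ₄∂_T and L1 = ∂_X − λ₄(∂_Y + εX∂_X). -/

import Mathlib

noncomputable section

abbrev Pt3 := Fin 3 → ℝ

def pd (j : Fin 3) (f : Pt3 → ℝ) (p : Pt3) : ℝ :=
  fderiv ℝ f p (Pi.single j 1)

section aux

variable (ε lam4 : ℝ) (p : Pt3)

private def prj (i : Fin 3) : Pt3 →L[ℝ] ℝ := ContinuousLinearMap.proj i

private lemma hasF (hl : lam4 ≠ 0) :
    HasFDerivAt (fun r : Pt3 => (1 - ε * lam4 * r 0) * Real.exp (-(ε * (r 2 / lam4 + r 1))))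
      ((1 - ε * lam4 * p 0) •
          (Real.exp (-(ε * (p 2 / lam4 + p 1))) •
            (-(ε • ((lam4⁻¹) • prj 2 + prj 1))))
        + Real.exp (-(ε * (p 2 / lam4 + p 1))) • (0 - (ε * lam4) • prj 0)) p := by
  have h0 : HasFDerivAt (fun r : Pt3 => 1 - ε * lam4 * r 0)
      (0 - (ε * lam4) • prj 0) p := by
    exact (hasFDerivAt_const 1 p).sub (((ContinuousLinearMap.proj 0 : Pt3 →L[ℝ] ℝ).hasFDerivAt (x := p)).const_smul (ε * lam4))
  have hin : HasFDerivAt (fun r : Pt3 => -(ε * (r 2 / lam4 + r 1)))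
      (-(ε • ((lam4⁻¹) • prj 2 + prj 1))) p := by
    have : HasFDerivAt (fun r : Pt3 => r 2 / lam4 + r 1)
        ((lam4⁻¹) • prj 2 + prj 1) p := by
      have h2 : HasFDerivAt (fun r : Pt3 => r 2 / lam4) ((lam4⁻¹) • prj 2) p := by
        have h2' : HasFDerivAt (fun r : Pt3 => lam4⁻¹ * r 2) ((lam4⁻¹) • prj 2) p :=
          (((ContinuousLinearMap.proj 2 : Pt3 →L[ℝ] ℝ).hasFDerivAt (x := p)).const_smul (lam4⁻¹))
        simpa [div_eq_mul_inv, mul_comm] using h2'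
      exact h2.add ((ContinuousLinearMap.proj 1 : Pt3 →L[ℝ] ℝ).hasFDerivAt (x := p))
    exact (this.const_smul ε).neg
  exact h0.mul hin.exp

private lemma pd0 (hl : lam4 ≠ 0) :
    pd 0 (fun r => (1 - ε * lam4 * r 0) * Real.exp (-(ε * (r 2 / lam4 + r 1)))) p
      = -(ε * lam4) * Real.exp (-(ε * (p 2 / lam4 + p 1))) := by
  rw [pd, (hasF ε lam4 p hl).fderiv]
  simp [prj, Pi.single_eq_of_ne, smul_eq_mul]
  ring

private lemma pd1 (hl : lam4 ≠ 0) :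
    pd 1 (fun r => (1 - ε * lam4 * r 0) * Real.exp (-(ε * (r 2 / lam4 + r 1)))) p
      = (1 - ε * lam4 * p 0) * (-ε) * Real.exp (-(ε * (p 2 / lam4 + p 1))) := by
  rw [pd, (hasF ε lam4 p hl).fderiv]
  simp [prj, Pi.single_eq_of_ne, smul_eq_mul]
  ring

private lemma pd2 (hl : lam4 ≠ 0) :
    pd 2 (fun r => (1 - ε * lam4 * r 0) * Real.exp (-(ε * (r 2 / lam4 + r 1)))) p
      = (1 - ε * lam4 * p 0) * (-ε / lam4) * Real.exp (-(ε * (p 2 / lam4 + p 1))) := by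
  rw [pd, (hasF ε lam4 p hl).fderiv]
  simp [prj, Pi.single_eq_of_ne, smul_eq_mul]
  ring

end aux

theorem stmt14 (ε lam4 : ℝ) (hε : ε ≠ 0) (hl : lam4 ≠ 0) :
    ∀ q : Pt3,
      pd 1 (fun r => (1 - ε * lam4 * r 0) * Real.exp (-(ε * (r 2 / lam4 + r 1)))) q
        - lam4 * pd 2 (fun r => (1 - ε * lam4 * r 0) *
            Real.exp (-(ε * (r 2 / lam4 + r 1)))) q = 0 ∧
      pd 0 (fun r => (1 - ε * lam4 * r 0) * Real.exp (-(ε * (r 2 / lam4 + r 1)))) q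
        - lam4 * (pd 1 (fun r => (1 - ε * lam4 * r 0) *
              Real.exp (-(ε * (r 2 / lam4 + r 1)))) q
          + ε * q 0 * pd 0 (fun r => (1 - ε * lam4 * r 0) *
              Real.exp (-(ε * (r 2 / lam4 + r 1)))) q) = 0 := by
  intro q
  rw [pd0 ε lam4 q hl, pd1 ε lam4 q hl, pd2 ε lam4 q hl]
  constructor <;> field_simp <;> ring
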